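/- Let K ⊂ ℝ³ be a centrally symmetric convex body and T ∈ GL(3) with B₂³ ⊆ T·B∞³ ⊆ √3·B₂³ (where B∞³ = [-1,1]³). Then T ∈ O(3), i.e., T is an orthogonal transformation. -/

import Mathlib

open MeasureTheory
open scoped RealInnerProductSpace

set_option maxHeartbeats 1000000

/-- Rigidity of the John position of the cube: if `T ∈ GL(3)` satisfies
`B₂³ ⊆ T(B∞³) ⊆ √3 B₂³`, then `T` is an orthogonal transformation. -/
theorem cube_john_position_rigidity (K : Set (EuclideanSpace ℝ (Fin 3)))
    (hKcomp : IsCompact K) (hKconv : Convex ℝ K) (hKsymm : K = -K)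
    (hKint : (interior K).Nonempty)
    (T : EuclideanSpace ℝ (Fin 3) ≃ₗ[ℝ] EuclideanSpace ℝ (Fin 3))
    (h1 : Metric.closedBall 0 1 ⊆ T '' {x : EuclideanSpace ℝ (Fin 3) | ∀ i, |x i| ≤ 1})
    (h2 : T '' {x : EuclideanSpace ℝ (Fin 3) | ∀ i, |x i| ≤ 1} ⊆
      Metric.closedBall 0 (Real.sqrt 3)) :
    ∀ x, ‖T x‖ = ‖x‖ := by
  classical
  set E := EuclideanSpace ℝ (Fin 3)
  -- the columns of T
  set v : Fin 3 → E := fun i => T (EuclideanSpace.single i (1 : ℝ)) with hv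
  -- decomposition of T x
  have hdecomp : ∀ x : E, T x = x 0 • v 0 + x 1 • v 1 + x 2 • v 2 := by
    intro x
    have hx : x = x 0 • EuclideanSpace.single 0 (1 : ℝ) +
        x 1 • EuclideanSpace.single 1 (1 : ℝ) + x 2 • EuclideanSpace.single 2 (1 : ℝ) := by
      ext j
      rw [PiLp.add_apply, PiLp.add_apply, PiLp.smul_apply, PiLp.smul_apply, PiLp.smul_apply]
      fin_cases j <;> simp [EuclideanSpace.single_apply]
    calc T x = T (x 0 • EuclideanSpace.single 0 (1 : ℝ) +
        x 1 • EuclideanSpace.single 1 (1 : ℝ) + x 2 • EuclideanSpace.single 2 (1 : ℝ)) := by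
          rw [← hx]
      _ = x 0 • v 0 + x 1 • v 1 + x 2 • v 2 := by
          simp [map_add, _root_.map_smul, hv]
  -- vertex bound from h2
  have key : ∀ s : Fin 3 → ℝ, (∀ i, |s i| ≤ 1) →
      ‖s 0 • v 0 + s 1 • v 1 + s 2 • v 2‖ ≤ Real.sqrt 3 := by
    intro s hs
    have hmem : (show E from WithLp.toLp 2 (fun i => s i)) ∈
        {x : E | ∀ i, |x i| ≤ 1} := hs
    have := h2 ⟨_, hmem, rfl⟩
    rw [Metric.mem_closedBall, dist_zero_right] at this
    have hde := hdecomp (show E from WithLp.toLp 2 (fun i => s i))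
    rw [hde] at this
    exact this
  have sq3 : Real.sqrt 3 * Real.sqrt 3 = 3 :=
    Real.mul_self_sqrt (by norm_num)
  have habs : ∀ t : ℝ, t = 1 ∨ t = -1 → |t| ≤ 1 := by
    rintro t (rfl | rfl) <;> norm_num
  have habs1 : ∀ (a b c : ℝ), a = 1 ∨ a = -1 → b = 1 ∨ b = -1 → c = 1 ∨ c = -1 →
      ∀ i : Fin 3, |(![a, b, c]) i| ≤ 1 := by
    intro a b c ha hb hc i
    fin_cases i
    · exact habs a ha
    · exact habs b hb
    · exact habs c hc
  -- squared-norm vertex bounds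
  have keysq : ∀ (a b c : ℝ), a = 1 ∨ a = -1 → b = 1 ∨ b = -1 → c = 1 ∨ c = -1 →
      ‖a • v 0 + b • v 1 + c • v 2‖ * ‖a • v 0 + b • v 1 + c • v 2‖ ≤ 3 := by
    intro a b c ha hb hc
    have h := key ![a, b, c] (habs1 a b c ha hb hc)
    simp only [Matrix.cons_val_zero, Matrix.cons_val_one, Matrix.head_cons,
      Matrix.cons_val_two, Matrix.tail_cons] at h
    nlinarith [norm_nonneg (a • v 0 + b • v 1 + c • v 2), Real.sqrt_nonneg 3, sq3]
  have q1 : ‖(v 0 + v 1) + v 2‖ * ‖(v 0 + v 1) + v 2‖ ≤ 3 := by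
    have := keysq 1 1 1 (Or.inl rfl) (Or.inl rfl) (Or.inl rfl)
    simpa [add_assoc] using this
  have q2 : ‖(v 0 + v 1) - v 2‖ * ‖(v 0 + v 1) - v 2‖ ≤ 3 := by
    have := keysq 1 1 (-1) (Or.inl rfl) (Or.inl rfl) (Or.inr rfl)
    simpa [sub_eq_add_neg, add_assoc] using this
  have q3 : ‖(v 0 - v 1) + v 2‖ * ‖(v 0 - v 1) + v 2‖ ≤ 3 := by
    have := keysq 1 (-1) 1 (Or.inl rfl) (Or.inr rfl) (Or.inl rfl)
    simpa [sub_eq_add_neg, add_assoc] using this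
  have q4 : ‖(v 0 - v 1) - v 2‖ * ‖(v 0 - v 1) - v 2‖ ≤ 3 := by
    have := keysq 1 (-1) (-1) (Or.inl rfl) (Or.inr rfl) (Or.inr rfl)
    simpa [sub_eq_add_neg, add_assoc] using this
  have p1 := parallelogram_law_with_norm ℝ (v 0 + v 1) (v 2)
  have p2 := parallelogram_law_with_norm ℝ (v 0 - v 1) (v 2)
  have p3 := parallelogram_law_with_norm ℝ (v 0) (v 1)
  -- sum of squares of column norms is at most 3
  have hsum : ‖v 0‖ * ‖v 0‖ + ‖v 1‖ * ‖v 1‖ + ‖v 2‖ * ‖v 2‖ ≤ 3 := by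
    nlinarith [q1, q2, q3, q4, p1, p2, p3]
  -- lower bound: each column has norm at least 1
  have hge : ∀ i, 1 ≤ ‖v i‖ := by
    intro i
    have hne : v i ≠ 0 := by
      simp only [hv]
      intro h
      have := T.injective (h.trans (map_zero T).symm)
      have h0 : (EuclideanSpace.single i (1 : ℝ)) i = 0 := by rw [this]; rfl
      simp [EuclideanSpace.single_apply] at h0
    have hc : 0 < ‖v i‖ := norm_pos_iff.mpr hne
    set c := ‖v i‖ with hcdef
    have hx : ‖c⁻¹ • v i‖ = 1 := by
      rw [norm_smul, norm_inv, Real.norm_eq_abs, abs_of_pos hc, ← hcdef,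
        inv_mul_cancel₀ (ne_of_gt hc)]
    have hmem : c⁻¹ • v i ∈ Metric.closedBall (0 : E) 1 := by
      rw [Metric.mem_closedBall, dist_zero_right, hx]
    obtain ⟨y, hy, hTy⟩ := h1 hmem
    have hy' : y = c⁻¹ • EuclideanSpace.single i (1 : ℝ) := by
      apply T.injective
      rw [hTy, _root_.map_smul]
    have hyi := hy i
    rw [hy', PiLp.smul_apply, EuclideanSpace.single_apply] at hyi
    simp only [if_pos rfl, if_true, smul_eq_mul, mul_one] at hyi
    have hinv : c⁻¹ ≤ 1 := le_trans (le_abs_self _) hyi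
    calc (1:ℝ) = c⁻¹ * c := (inv_mul_cancel₀ (ne_of_gt hc)).symm
      _ ≤ 1 * c := mul_le_mul_of_nonneg_right hinv (le_of_lt hc)
      _ = c := one_mul c
  -- hence each column has norm exactly 1
  have s0 : 1 ≤ ‖v 0‖ * ‖v 0‖ := by nlinarith [hge 0]
  have s1 : 1 ≤ ‖v 1‖ * ‖v 1‖ := by nlinarith [hge 1]
  have s2 : 1 ≤ ‖v 2‖ * ‖v 2‖ := by nlinarith [hge 2]
  have hub0 : ‖v 0‖ ≤ 1 := by nlinarith [hsum, s1, s2, norm_nonneg (v 0)]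
  have hub1 : ‖v 1‖ ≤ 1 := by nlinarith [hsum, s0, s2, norm_nonneg (v 1)]
  have hub2 : ‖v 2‖ ≤ 1 := by nlinarith [hsum, s0, s1, norm_nonneg (v 2)]
  have hnorm1 : ∀ i, ‖v i‖ = 1 := fun i =>
    match i with
    | 0 => le_antisymm hub0 (hge 0)
    | 1 => le_antisymm hub1 (hge 1)
    | 2 => le_antisymm hub2 (hge 2)
  -- rows of the inverse, via the adjoint
  set w : Fin 3 → E := fun i =>
    LinearMap.adjoint (T.symm : E →ₗ[ℝ] E) (EuclideanSpace.single i (1 : ℝ)) with hwdef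
  have hw_inner : ∀ i (x : E), ⟪w i, x⟫ = T.symm x i := by
    intro i x
    rw [hwdef]
    rw [LinearMap.adjoint_inner_left]
    rw [EuclideanSpace.inner_single_left]
    simp
  have hwv : ∀ i j, ⟪w i, v j⟫ = if i = j then 1 else 0 := by
    intro i j
    rw [hw_inner]
    simp only [hv]
    rw [T.symm_apply_apply, EuclideanSpace.single_apply]
  have hwle : ∀ i, ‖w i‖ ≤ 1 := by
    intro i
    by_cases hw0 : w i = 0
    · rw [hw0, norm_zero]; norm_num
    have hc : 0 < ‖w i‖ := norm_pos_iff.mpr hw0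
    set c := ‖w i‖ with hcdef
    have hx : ‖c⁻¹ • w i‖ = 1 := by
      rw [norm_smul, norm_inv, Real.norm_eq_abs, abs_of_pos hc, ← hcdef,
        inv_mul_cancel₀ (ne_of_gt hc)]
    have hmem : c⁻¹ • w i ∈ Metric.closedBall (0 : E) 1 := by
      rw [Metric.mem_closedBall, dist_zero_right, hx]
    obtain ⟨y, hy, hTy⟩ := h1 hmem
    have hyy : y = T.symm (c⁻¹ • w i) := by rw [← hTy]; exact (T.symm_apply_apply y).symm
    have hyi := hy i
    rw [hyy] at hyi
    have hval : T.symm (c⁻¹ • w i) i = c := by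
      rw [← hw_inner i (c⁻¹ • w i), real_inner_smul_right,
        real_inner_self_eq_norm_mul_norm, ← hcdef]
      field_simp
    rw [hval, abs_of_pos hc] at hyi
    exact hyi
  have hw_eq_v : ∀ i, w i = v i := by
    intro i
    have h11 : ⟪w i, v i⟫ = 1 := by rw [hwv]; simp
    have hle := real_inner_le_norm (w i) (v i)
    rw [hnorm1 i, mul_one] at hle
    rw [h11] at hle
    have hwn : ‖w i‖ = 1 := le_antisymm (hwle i) hle
    exact (inner_eq_one_iff_of_norm_eq_one (𝕜 := ℝ) hwn (hnorm1 i)).mp h11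
  have hvv : ∀ i j, ⟪v i, v j⟫ = if i = j then 1 else 0 := by
    intro i j
    rw [← hw_eq_v i]
    exact hwv i j
  -- final computation
  intro x
  have hTx := hdecomp x
  have hsq : ‖T x‖ * ‖T x‖ = x 0 * x 0 + x 1 * x 1 + x 2 * x 2 := by
    rw [← real_inner_self_eq_norm_mul_norm, hTx]
    simp only [inner_add_left, inner_add_right, real_inner_smul_left, real_inner_smul_right,
      hvv]
    norm_num [Fin.ext_iff]
  have hxsq : ‖x‖ * ‖x‖ = x 0 * x 0 + x 1 * x 1 + x 2 * x 2 := by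
    rw [← real_inner_self_eq_norm_mul_norm, PiLp.inner_apply]
    simp [Fin.sum_univ_three, RCLike.inner_apply, mul_comm]
    ring
  have heq : ‖T x‖ * ‖T x‖ = ‖x‖ * ‖x‖ := hsq.trans hxsq.symm
  rcases mul_self_eq_mul_self_iff.mp heq with h | h
  · exact h
  · have := norm_nonneg (T x)
    have := norm_nonneg x
    linarith
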